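/- Let A be an invertible d×d integer matrix and set SL_W = {g ∈ ℚ^d/ℤ^d : Ag ∈ ℤ^d and Σ_j g_j ∈ ℤ}. Then {h ∈ ℚ^d/ℤ^d : Aᵀh ∈ ℤ^d and hᵀAg ∈ ℤ for every g ∈ SL_W} is exactly the cyclic subgroup of ℚ^d/ℤ^d generated by (Aᵀ)^{−1}(1,…,1)ᵀ mod ℤ^d. (In other words, the dual of SL_W is the subgroup generated by the dual exponential grading operator J_{W^∨}.) -/

import Mathlib

lemma den_dvd_int_mul (q : ℚ) (n : ℤ) (h : (q.den : ℤ) ∣ n) :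
    ∃ m : ℤ, (n : ℚ) * q = (m : ℚ) := by
  obtain ⟨t, rfl⟩ := h
  refine ⟨t * q.num, ?_⟩
  have hden : (q.den : ℚ) ≠ 0 := by exact_mod_cast q.den_ne_zero
  have key : (q.den : ℚ) * q = (q.num : ℚ) := by
    have h0 := Rat.num_div_den q
    rw [div_eq_iff hden] at h0
    rw [mul_comm]
    exact h0.symm
  calc ((q.den * t : ℤ) : ℚ) * q = (t : ℚ) * ((q.den : ℚ) * q) := by push_cast; ring
    _ = (t : ℚ) * (q.num : ℚ) := by rw [key]
    _ = ((t * q.num : ℤ) : ℚ) := by push_cast; ring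
lemma key_int (d : ℕ) (N : ℤ) (hN : N ≠ 0) (w z : Fin d → ℤ)
    (H : ∀ v : Fin d → ℤ, (N ∣ ∑ i, w i * v i) → N ∣ ∑ i, z i * v i) :
    ∃ k : ℤ, ∀ i, N ∣ z i - k * w i := by
  classical
  set w' : Fin (d + 1) → ℤ := Fin.cons N w with hw'
  set I : Ideal ℤ := Ideal.span (Set.range w') with hI
  obtain ⟨c, hc⟩ : ∃ c, I = Ideal.span {c} :=
    ⟨Submodule.IsPrincipal.generator I, (Submodule.IsPrincipal.span_singleton_generator I).symm⟩
  have hdvd : ∀ i, c ∣ w' i := fun i => by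
    have : w' i ∈ I := Ideal.subset_span ⟨i, rfl⟩
    rwa [hc, Ideal.mem_span_singleton] at this
  have hcN : c ∣ N := by simpa [hw'] using hdvd 0
  have hcw : ∀ i : Fin d, c ∣ w i := fun i => by simpa [hw'] using hdvd i.succ
  have hcmem : c ∈ I := by rw [hc]; exact Ideal.mem_span_singleton_self c
  rw [hI, Ideal.span, Submodule.mem_span_range_iff_exists_fun] at hcmem
  simp only [smul_eq_mul] at hcmem
  obtain ⟨a, ha⟩ := hcmem
  have hc0 : c ≠ 0 := by
    rintro rfl
    rw [Ideal.span_singleton_eq_bot.mpr rfl] at hc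
    have : (N : ℤ) ∈ I := Ideal.subset_span ⟨0, rfl⟩
    rw [hc] at this
    exact hN (by simpa using this)
  obtain ⟨e, he⟩ := hcN
  have he0 : e ≠ 0 := by rintro rfl; simp at he; exact hN he
  set v₀ : Fin d → ℤ := fun i => a i.succ with hv₀
  have hsum : a 0 * N + ∑ i, w i * v₀ i = c := by
    rw [← ha, Fin.sum_univ_succ]
    simp [hw', hv₀, mul_comm]
  set s : ℤ := ∑ i, w i * v₀ i with hs
  -- step 1 : c ∣ ∑ z i * v₀ i
  have h1 : N ∣ ∑ i, z i * (e * v₀ i) := by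
    apply H
    have : ∑ i, w i * (e * v₀ i) = e * s := by
      rw [Finset.mul_sum]; congr 1; ext i; ring
    rw [this]
    have : e * s = N * (1 - e * a 0) := by
      have : s = c - a 0 * N := by omega
      rw [this, he]; ring
    rw [this]; exact Dvd.intro _ rfl
  have h1' : ∑ i, z i * (e * v₀ i) = e * ∑ i, z i * v₀ i := by
    rw [Finset.mul_sum]; congr 1; ext i; ring
  rw [h1', he] at h1
  obtain ⟨k, hk⟩ : c ∣ ∑ i, z i * v₀ i := by
    obtain ⟨t, ht⟩ := h1
    have : e * ∑ i, z i * v₀ i = e * (c * t) := by rw [ht]; ring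
    exact ⟨t, mul_left_cancel₀ he0 this⟩
  refine ⟨k, fun i => ?_⟩
  obtain ⟨m, hm⟩ := hcw i
  set v : Fin d → ℤ := fun j => (if j = i then 1 else 0) - m * v₀ j with hv
  have h2 : N ∣ ∑ j, z j * v j := by
    apply H
    have : ∑ j, w j * v j = w i - m * s := by
      simp only [hv, mul_sub, Finset.sum_sub_distrib, mul_ite, mul_one, mul_zero]
      rw [Finset.sum_ite_eq' Finset.univ i w, Finset.mul_sum]
      simp [Finset.mul_sum]; congr 1; ext j; ring
    rw [this, hm]
    have : c * m - m * s = m * (a 0) * N := by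
      have : s = c - a 0 * N := by omega
      rw [this]; ring
    rw [this]; exact ⟨m * a 0, by ring⟩
  have h2' : ∑ j, z j * v j = z i - m * ∑ j, z j * v₀ j := by
    simp only [hv, mul_sub, Finset.sum_sub_distrib, mul_ite, mul_one, mul_zero]
    rw [Finset.sum_ite_eq' Finset.univ i z, Finset.mul_sum]
    simp [Finset.mul_sum]; congr 1; ext j; ring
  rw [h2', hk] at h2
  have : z i - k * w i = z i - m * (c * k) := by rw [hm]; ring
  rw [this]; exact h2
/-- The lattice `ℤ^d` inside `ℚ^d`, as an additive subgroup. -/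
def intLat (d : ℕ) : AddSubgroup (Fin d → ℚ) where
  carrier := {p | ∀ j, ∃ m : ℤ, p j = (m : ℚ)}
  zero_mem' := fun j => ⟨0, by simp⟩
  add_mem' := by
    intro a b ha hb j
    obtain ⟨s, hs⟩ := ha j
    obtain ⟨t, ht⟩ := hb j
    exact ⟨s + t, by simp [Pi.add_apply, hs, ht]⟩
  neg_mem' := by
    intro a ha j
    obtain ⟨s, hs⟩ := ha j
    exact ⟨-s, by simp [Pi.neg_apply, hs]⟩

/-- The group `ℚ^d/ℤ^d`. -/
abbrev Qd (d : ℕ) := (Fin d → ℚ) ⧸ intLat d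

/-- The quotient map `ℚ^d → ℚ^d/ℤ^d`. -/
def mkQ {d : ℕ} (p : Fin d → ℚ) : Qd d := QuotientAddGroup.mk p

/-- The Berglund–Hübsch dual `G^∨ = {h ∈ ℚ^d/ℤ^d : Aᵀh ∈ ℤ^d and hᵀAg ∈ ℤ for
every g ∈ G}` of a subgroup `G ⊆ {p ∈ ℚ^d/ℤ^d : Ap ∈ ℤ^d}`. -/
def dualSet (d : ℕ) (A : Matrix (Fin d) (Fin d) ℤ) (G : Set (Qd d)) : Set (Qd d) :=
  {y | ∀ h : Fin d → ℚ, mkQ h = y →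
    ((∀ j, ∃ m : ℤ, ∑ i, (A i j : ℚ) * h i = (m : ℚ)) ∧
      ∀ x ∈ G, ∀ g : Fin d → ℚ, mkQ g = x →
        ∃ m : ℤ, ∑ i, ∑ j, h i * (A i j : ℚ) * g j = (m : ℚ))}

/-- the dual of `SL_W = {g ∈ ℚ^d/ℤ^d : Ag ∈ ℤ^d, Σ_j g_j ∈ ℤ}` is
exactly the cyclic subgroup of `ℚ^d/ℤ^d` generated by the dual exponential
grading operator `J_{W^∨} = (Aᵀ)^{−1}(1,…,1)ᵀ mod ℤ^d`. -/
theorem dual_of_SLW_eq_cyclic_JWdual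
    (d : ℕ) (A : Matrix (Fin d) (Fin d) ℤ)
    (hA : (A.map (fun a => (a : ℚ))).det ≠ 0)
    (qv : Fin d → ℚ)
    (hqv : ((A.map (fun a => (a : ℚ))).transpose).mulVec qv = fun _ => 1) :
    dualSet d A
        {x : Qd d | ∀ p : Fin d → ℚ, mkQ p = x →
          ((∀ i, ∃ m : ℤ, ∑ j, (A i j : ℚ) * p j = (m : ℚ)) ∧
            ∃ m : ℤ, ∑ j, p j = (m : ℚ))} =
      Set.range (fun n : ℤ => n • mkQ qv) := by
  classical
  set Aq : Matrix (Fin d) (Fin d) ℚ := A.map (fun a => (a : ℚ)) with hAq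
  have hq1 : ∀ j, ∑ i, (A i j : ℚ) * qv i = 1 := by
    intro j
    have := congrFun hqv j
    simpa [hAq, Matrix.mulVec, dotProduct, Matrix.transpose_apply, Matrix.map_apply,
      mul_comm] using this
  ext y
  constructor
  · -- hard direction
    intro hy
    obtain ⟨h, rfl⟩ := QuotientAddGroup.mk_surjective y
    obtain ⟨h1, h2⟩ := hy h rfl
    -- the pairing property
    have pair : ∀ v : Fin d → ℤ, (∃ t : ℤ, ∑ i, qv i * (v i : ℚ) = (t : ℚ)) →
        ∃ m : ℤ, ∑ i, h i * (v i : ℚ) = (m : ℚ) := by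
      intro v ⟨t, ht⟩
      set g : Fin d → ℚ := (Aq⁻¹).mulVec (fun i => (v i : ℚ)) with hg
      have hAg : Aq.mulVec g = fun i => (v i : ℚ) := by
        rw [hg, Matrix.mulVec_mulVec, Matrix.mul_nonsing_inv _ (isUnit_iff_ne_zero.mpr hA),
          Matrix.one_mulVec]
      have hAg' : ∀ i, ∑ j, (A i j : ℚ) * g j = (v i : ℚ) := by
        intro i
        have := congrFun hAg i
        simpa [hAq, Matrix.mulVec, dotProduct, Matrix.map_apply] using this
      have hsg : ∑ j, g j = (t : ℚ) := by
        rw [← ht]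
        calc ∑ j, g j = ∑ j, (∑ i, (A i j : ℚ) * qv i) * g j := by
              apply Finset.sum_congr rfl; intro j _; rw [hq1 j, one_mul]
          _ = ∑ i, qv i * ∑ j, (A i j : ℚ) * g j := by
              simp only [Finset.mul_sum, Finset.sum_mul]
              rw [Finset.sum_comm]
              apply Finset.sum_congr rfl; intro j _
              apply Finset.sum_congr rfl; intro i _; ring
          _ = ∑ i, qv i * (v i : ℚ) := by
              apply Finset.sum_congr rfl; intro i _; rw [hAg' i]
      have hmem : mkQ g ∈ {x : Qd d | ∀ p : Fin d → ℚ, mkQ p = x →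
          ((∀ i, ∃ m : ℤ, ∑ j, (A i j : ℚ) * p j = (m : ℚ)) ∧
            ∃ m : ℤ, ∑ j, p j = (m : ℚ))} := by
        intro p hp
        have hpg : -p + g ∈ intLat d := QuotientAddGroup.eq.mp hp
        choose mf hmf using hpg
        have hpj : ∀ j, p j = g j - (mf j : ℚ) := by
          intro j
          have := hmf j
          simp only [Pi.add_apply, Pi.neg_apply] at this
          linarith
        constructor
        · intro i
          refine ⟨v i - ∑ j, A i j * mf j, ?_⟩
          push_cast
          rw [← hAg' i, ← Finset.sum_sub_distrib]
          apply Finset.sum_congr rfl; intro j _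
          rw [hpj j]; ring
        · refine ⟨t - ∑ j, mf j, ?_⟩
          push_cast
          rw [← hsg, ← Finset.sum_sub_distrib]
          apply Finset.sum_congr rfl; intro j _
          rw [hpj j]
      obtain ⟨m, hm⟩ := h2 (mkQ g) hmem g rfl
      refine ⟨m, ?_⟩
      rw [← hm]
      calc ∑ i, h i * (v i : ℚ) = ∑ i, h i * ∑ j, (A i j : ℚ) * g j := by
            apply Finset.sum_congr rfl; intro i _; rw [hAg' i]
        _ = ∑ i, ∑ j, h i * (A i j : ℚ) * g j := by
            apply Finset.sum_congr rfl; intro i _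
            rw [Finset.mul_sum]
            apply Finset.sum_congr rfl; intro j _; ring
    -- common denominator
    set N : ℤ := ∏ i, ((qv i).den : ℤ) with hNdef
    have hNpos : 0 < N := Finset.prod_pos (fun i _ => by exact_mod_cast (qv i).pos)
    have hN0 : N ≠ 0 := ne_of_gt hNpos
    have hNQ0 : (N : ℚ) ≠ 0 := by exact_mod_cast hN0
    have hdvd : ∀ i, ((qv i).den : ℤ) ∣ N :=
      fun i => Finset.dvd_prod_of_mem _ (Finset.mem_univ i)
    have hNq : ∀ i, ∃ m : ℤ, (N : ℚ) * qv i = (m : ℚ) :=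
      fun i => den_dvd_int_mul (qv i) N (hdvd i)
    choose w hw using hNq
    have hNh : ∀ i, ∃ m : ℤ, (N : ℚ) * h i = (m : ℚ) := by
      intro i
      obtain ⟨m, hm⟩ := pair (fun j => if j = i then N else 0)
        ⟨w i, by
          rw [← hw i]
          rw [Finset.sum_eq_single i]
          · push_cast; simp [mul_comm]
          · intro b _ hb; simp [hb]
          · intro hi; exact absurd (Finset.mem_univ i) hi⟩
      refine ⟨m, ?_⟩
      rw [← hm, Finset.sum_eq_single i]
      · simp [mul_comm]
      · intro b _ hb; simp [hb]
      · intro hi; exact absurd (Finset.mem_univ i) hi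
    choose z hz using hNh
    have H : ∀ v : Fin d → ℤ, (N ∣ ∑ i, w i * v i) → N ∣ ∑ i, z i * v i := by
      intro v ⟨t, ht⟩
      obtain ⟨m, hm⟩ := pair v ⟨t, by
        have : (N : ℚ) * ∑ i, qv i * (v i : ℚ) = (N : ℚ) * (t : ℚ) := by
          rw [Finset.mul_sum]
          calc ∑ i, (N : ℚ) * (qv i * (v i : ℚ))
              = ∑ i, (w i : ℚ) * (v i : ℚ) := by
                apply Finset.sum_congr rfl; intro i _; rw [← hw i]; ring
            _ = (N : ℚ) * (t : ℚ) := by exact_mod_cast ht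
        exact mul_left_cancel₀ hNQ0 this⟩
      refine ⟨m, ?_⟩
      have : ((∑ i, z i * v i : ℤ) : ℚ) = ((N * m : ℤ) : ℚ) := by
        push_cast
        calc ∑ i, (z i : ℚ) * (v i : ℚ) = ∑ i, (N : ℚ) * (h i * (v i : ℚ)) := by
              apply Finset.sum_congr rfl; intro i _; rw [← hz i]; ring
          _ = (N : ℚ) * (m : ℚ) := by rw [← Finset.mul_sum, hm]
      exact_mod_cast this
    obtain ⟨k, hk⟩ := key_int d N hN0 w z H
    refine ⟨k, ?_⟩
    show k • mkQ qv = _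
    have : mkQ (k • qv) = k • mkQ qv := QuotientAddGroup.mk_zsmul _ qv k
    rw [← this]
    apply QuotientAddGroup.eq.mpr
    intro j
    obtain ⟨t, htj⟩ := hk j
    refine ⟨t, ?_⟩
    have : (N : ℚ) * ((-(k • qv) + h) j) = (N : ℚ) * (t : ℚ) := by
      simp only [Pi.add_apply, Pi.neg_apply, Pi.smul_apply, zsmul_eq_mul,
        Pi.mul_apply, Pi.intCast_apply]
      have h1' : (N : ℚ) * qv j = (w j : ℚ) := hw j
      have h2' : (N : ℚ) * h j = (z j : ℚ) := hz j
      have hc : ((z j - k * w j : ℤ) : ℚ) = ((N * t : ℤ) : ℚ) := by rw [htj]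
      push_cast at hc
      linear_combination (-(k : ℚ)) * h1' + h2' + hc
    exact mul_left_cancel₀ hNQ0 this
  · -- easy direction
    rintro ⟨n, rfl⟩
    intro h hh
    have hh' : mkQ h = mkQ (n • qv) := by
      rw [hh]; exact (QuotientAddGroup.mk_zsmul _ qv n).symm
    have hmem : -h + n • qv ∈ intLat d := QuotientAddGroup.eq.mp hh'
    choose mf hmf using hmem
    have hhj : ∀ j, h j = n * qv j - (mf j : ℚ) := by
      intro j
      have := hmf j
      simp only [Pi.add_apply, Pi.neg_apply, Pi.smul_apply, zsmul_eq_mul,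
        Pi.mul_apply, Pi.intCast_apply] at this
      linarith
    constructor
    · intro j
      refine ⟨n - ∑ i, A i j * mf i, ?_⟩
      push_cast
      calc ∑ i, (A i j : ℚ) * h i
          = ∑ i, ((n : ℚ) * ((A i j : ℚ) * qv i) - (A i j : ℚ) * (mf i : ℚ)) := by
            apply Finset.sum_congr rfl; intro i _; rw [hhj i]; ring
        _ = (n : ℚ) * ∑ i, (A i j : ℚ) * qv i - ∑ i, (A i j : ℚ) * (mf i : ℚ) := by
            rw [Finset.sum_sub_distrib, Finset.mul_sum]
        _ = (n : ℚ) - ∑ i, (A i j : ℚ) * (mf i : ℚ) := by rw [hq1 j, mul_one]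
    · intro x hx g hg
      obtain ⟨hAg, hSg⟩ := hx g hg
      choose ag hag using hAg
      obtain ⟨sg, hsg⟩ := hSg
      refine ⟨n * sg - ∑ i, mf i * ag i, ?_⟩
      have hsum1 : ∑ i, qv i * (ag i : ℚ) = (sg : ℚ) := by
        calc ∑ i, qv i * (ag i : ℚ) = ∑ i, qv i * ∑ j, (A i j : ℚ) * g j := by
              apply Finset.sum_congr rfl; intro i _; rw [hag i]
          _ = ∑ j, (∑ i, (A i j : ℚ) * qv i) * g j := by
              simp only [Finset.mul_sum, Finset.sum_mul]
              rw [Finset.sum_comm]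
              apply Finset.sum_congr rfl; intro j _
              apply Finset.sum_congr rfl; intro i _; ring
          _ = ∑ j, g j := by
              apply Finset.sum_congr rfl; intro j _; rw [hq1 j, one_mul]
          _ = (sg : ℚ) := hsg
      calc ∑ i, ∑ j, h i * (A i j : ℚ) * g j
          = ∑ i, h i * ∑ j, (A i j : ℚ) * g j := by
            apply Finset.sum_congr rfl; intro i _
            rw [Finset.mul_sum]
            apply Finset.sum_congr rfl; intro j _; ring
        _ = ∑ i, h i * (ag i : ℚ) := by
            apply Finset.sum_congr rfl; intro i _; rw [hag i]
        _ = ∑ i, ((n : ℚ) * (qv i * (ag i : ℚ)) - (mf i : ℚ) * (ag i : ℚ)) := by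
            apply Finset.sum_congr rfl; intro i _; rw [hhj i]; ring
        _ = (n : ℚ) * ∑ i, qv i * (ag i : ℚ) - ∑ i, (mf i : ℚ) * (ag i : ℚ) := by
            rw [Finset.sum_sub_distrib, Finset.mul_sum]
        _ = ((n * sg - ∑ i, mf i * ag i : ℤ) : ℚ) := by
            rw [hsum1]; push_cast; ring
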